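/- Let X be a nonnegative self-adjoint contraction on H, {X_n} a sequence of nonnegative self-adjoint contractions converging strongly to X, and K a closed subspace such that the sequence of shorted operators {(I - X_n)_K} is non-increasing. Then the strong limit of (I - X_n)_K is ≤ (I - X)_K. -/

import Mathlib

open ContinuousLinearMap

variable {H : Type*} [NormedAddCommGroup H] [InnerProductSpace ℂ H] [CompleteSpace H]

/-- `W` is the Kreĭn shorted operator of `S` with respect to the closed subspace `K`. -/
def IsShortedOp (S W : H →L[ℂ] H) (K : Submodule ℂ H) : Prop :=
  IsSelfAdjoint W ∧
    ∀ f : H, (inner ℂ (W f) f : ℂ).re = ⨅ φ : Kᗮ, (inner ℂ (S (f + φ)) (f + φ) : ℂ).re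
/-- Let `X` be a nonnegative self-adjoint contraction, `{Xₙ}` a
sequence of nonnegative self-adjoint contractions converging strongly to `X`, and
`K` a closed subspace such that the sequence `{(I - Xₙ)_K}` is non-increasing.
Then the strong limit of `(I - Xₙ)_K` is `≤ (I - X)_K`. -/
theorem shorted_limit_le (X : H →L[ℂ] H) (hX : X.IsPositive)
    (hXc : (1 - X).IsPositive)
    (Xs : ℕ → (H →L[ℂ] H)) (hXs : ∀ n, (Xs n).IsPositive)
    (hXsc : ∀ n, (1 - Xs n).IsPositive)
    (hconv : ∀ f : H, Filter.Tendsto (fun n => Xs n f) Filter.atTop (nhds (X f)))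
    (K : Submodule ℂ H) (hK : IsClosed (K : Set H))
    (W : ℕ → (H →L[ℂ] H)) (hW : ∀ n, IsShortedOp (1 - Xs n) (W n) K)
    (hmono : ∀ n, (W n - W (n + 1)).IsPositive)
    (Wlim : H →L[ℂ] H)
    (hWlim : ∀ f : H, Filter.Tendsto (fun n => W n f) Filter.atTop (nhds (Wlim f)))
    (V : H →L[ℂ] H) (hV : IsShortedOp (1 - X) V K) :
    (V - Wlim).IsPositive := by
  -- Wlim is self-adjoint as strong limit of self-adjoint operators
  have hWsa : ∀ n, LinearMap.IsSymmetric ((W n : H →L[ℂ] H) : H →ₗ[ℂ] H) := fun n =>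
    ((isSelfAdjoint_iff_isSymmetric).mp (hW n).1)
  have hWlimSa : IsSelfAdjoint Wlim := by
    rw [isSelfAdjoint_iff_isSymmetric]
    intro x y
    have h1 : Filter.Tendsto (fun n => (inner ℂ (W n x) y : ℂ)) Filter.atTop
        (nhds (inner ℂ (Wlim x) y)) :=
      Filter.Tendsto.inner (hWlim x) tendsto_const_nhds
    have h2 : Filter.Tendsto (fun n => (inner ℂ x (W n y) : ℂ)) Filter.atTop
        (nhds (inner ℂ x (Wlim y))) :=
      Filter.Tendsto.inner tendsto_const_nhds (hWlim y)
    have heq : (fun n => (inner ℂ (W n x) y : ℂ)) = fun n => (inner ℂ x (W n y) : ℂ) := by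
      funext n; exact hWsa n x y
    rw [heq] at h1
    exact tendsto_nhds_unique h1 h2
  constructor
  · exact (isSelfAdjoint_iff_isSymmetric).mp (IsSelfAdjoint.sub hV.1 hWlimSa)
  · intro f
    have key : (inner ℂ (Wlim f) f : ℂ).re ≤ (inner ℂ (V f) f : ℂ).re := by
      rw [(hV).2 f]
      -- limit of quadratic forms
      have hlimW : Filter.Tendsto (fun n => (inner ℂ (W n f) f : ℂ).re) Filter.atTop
          (nhds ((inner ℂ (Wlim f) f : ℂ).re)) :=
        (Complex.continuous_re.tendsto _).comp
          (Filter.Tendsto.inner (hWlim f) tendsto_const_nhds)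
      apply le_ciInf
      intro φ
      have hlimX : Filter.Tendsto (fun n => (inner ℂ ((1 - Xs n) (f + φ)) (f + φ) : ℂ).re)
          Filter.atTop (nhds ((inner ℂ ((1 - X) (f + φ)) (f + φ) : ℂ).re)) := by
        apply (Complex.continuous_re.tendsto _).comp
        apply Filter.Tendsto.inner _ tendsto_const_nhds
        simp only [sub_apply, one_apply]
        exact (tendsto_const_nhds.sub (hconv (f + φ)))
      refine le_of_tendsto_of_tendsto hlimW hlimX (Filter.Eventually.of_forall fun n => ?_)
      simp only []
      rw [(hW n).2 f]
      apply ciInf_le _ φ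
      refine ⟨0, ?_⟩
      rintro x ⟨ψ, rfl⟩
      exact (hXsc n).2 (f + ψ)
    have : (inner ℂ ((V - Wlim) f) f : ℂ) = inner ℂ (V f) f - inner ℂ (Wlim f) f := by
      simp [sub_apply, inner_sub_left]
    rw [reApplyInnerSelf_apply]
    simp only [RCLike.re_to_complex]
    rw [this, Complex.sub_re]
    linarith
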